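/- Let 0 < R₂ < R₁. Then R₂·(K₀(R₁)·I₁(R₂) + I₀(R₁)·K₁(R₂)) > R₁·(K₀(R₁)·I₁(R₁) + I₀(R₁)·K₁(R₁)). In particular, the equation R₂/R₁ = (K₀(R₁)·I₁(R₁) + I₀(R₁)·K₁(R₁)) / (K₀(R₁)·I₁(R₂) + I₀(R₁)·K₁(R₂)) has no solution (R₁, R₂) with 0 < R₂ < R₁. -/

import Mathlib

open Real Set

/-- For `0 < R₂ < R₁` one has
`R₂·(K₀(R₁)·I₁(R₂) + I₀(R₁)·K₁(R₂)) > R₁·(K₀(R₁)·I₁(R₁) + I₀(R₁)·K₁(R₁))`;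
in particular the equation
`R₂/R₁ = (K₀(R₁)·I₁(R₁) + I₀(R₁)·K₁(R₁))/(K₀(R₁)·I₁(R₂) + I₀(R₁)·K₁(R₂))`
has no solution with `0 < R₂ < R₁`. -/
theorem stmt_1 (R₁ R₂ : ℝ) (hR₂ : 0 < R₂) (hR : R₂ < R₁)
    (I₀ I₁ K₀ K₁ : ℝ → ℝ)
    (hI₀ : ∀ x > (0 : ℝ), HasDerivAt I₀ (I₁ x) x)
    (hK₀ : ∀ x > (0 : ℝ), HasDerivAt K₀ (-K₁ x) x)
    (hI₁ : ∀ x > (0 : ℝ), DifferentiableAt ℝ I₁ x ∧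
      x * deriv I₁ x + I₁ x = x * I₀ x)
    (hK₁ : ∀ x > (0 : ℝ), DifferentiableAt ℝ K₁ x ∧
      x * deriv K₁ x + K₁ x = -(x * K₀ x))
    (hI₀pos : ∀ x > (0 : ℝ), 0 < I₀ x)
    (hK₀pos : ∀ x > (0 : ℝ), 0 < K₀ x)
    (hI₀mono : StrictMonoOn I₀ (Ioi (0 : ℝ)))
    (hK₀anti : StrictAntiOn K₀ (Ioi (0 : ℝ))) :
    R₂ * (K₀ R₁ * I₁ R₂ + I₀ R₁ * K₁ R₂) >
      R₁ * (K₀ R₁ * I₁ R₁ + I₀ R₁ * K₁ R₁) ∧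
    R₂ / R₁ ≠
      (K₀ R₁ * I₁ R₁ + I₀ R₁ * K₁ R₁) / (K₀ R₁ * I₁ R₂ + I₀ R₁ * K₁ R₂) := by
  have hR₁ : 0 < R₁ := hR₂.trans hR
  set a := K₀ R₁ with ha
  set b := I₀ R₁ with hb
  set F : ℝ → ℝ := fun x => a * (x * I₁ x) + b * (x * K₁ x) with hF
  have hFderiv : ∀ x ∈ Ioi (0:ℝ), HasDerivAt F (x * (a * I₀ x - b * K₀ x)) x := by
    intro x hx
    have hx' : (0:ℝ) < x := hx
    have h1 : HasDerivAt (fun y => y * I₁ y) (x * I₀ x) x := by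
      have := (hasDerivAt_id x).mul (hI₁ x hx').1.hasDerivAt
      simp only [id, Pi.mul_def] at this
      refine this.congr_deriv ?_
      have := (hI₁ x hx').2
      linarith
    have h2 : HasDerivAt (fun y => y * K₁ y) (-(x * K₀ x)) x := by
      have := (hasDerivAt_id x).mul (hK₁ x hx').1.hasDerivAt
      simp only [id, Pi.mul_def] at this
      refine this.congr_deriv ?_
      have := (hK₁ x hx').2
      linarith
    have := (h1.const_mul a).add (h2.const_mul b)
    refine this.congr_deriv ?_
    ring
  have hapos : 0 < a := hK₀pos R₁ hR₁
  have hbpos : 0 < b := hI₀pos R₁ hR₁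
  have key : F R₁ < F R₂ := by
    have hanti : StrictAntiOn F (Icc R₂ R₁) := by
      apply strictAntiOn_of_deriv_neg (convex_Icc _ _)
      · apply ContinuousOn.mono _ (fun y hy => hy)
        intro y hy
        exact ((hFderiv y (lt_of_lt_of_le hR₂ hy.1)).differentiableAt).continuousAt.continuousWithinAt
      · intro x hx
        rw [interior_Icc] at hx
        have hx0 : (0:ℝ) < x := hR₂.trans hx.1
        have hd := (hFderiv x hx0).deriv
        rw [hd]
        have hI : I₀ x < b := hI₀mono hx0 hR₁ hx.2
        have hK : a < K₀ x := hK₀anti hx0 hR₁ hx.2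
        have hI0 : 0 < I₀ x := hI₀pos x hx0
        have hK0 : 0 < K₀ x := hK₀pos x hx0
        have h : a * I₀ x < b * K₀ x := by nlinarith
        nlinarith [mul_pos hx0 (sub_pos.mpr h)]
    exact hanti (left_mem_Icc.mpr hR.le) (right_mem_Icc.mpr hR.le) hR
  have main : R₂ * (a * I₁ R₂ + b * K₁ R₂) > R₁ * (a * I₁ R₁ + b * K₁ R₁) := by
    have : F R₂ = R₂ * (a * I₁ R₂ + b * K₁ R₂) := by simp [hF]; ring
    have h2 : F R₁ = R₁ * (a * I₁ R₁ + b * K₁ R₁) := by simp [hF]; ring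
    linarith [key, this.symm.le]
  refine ⟨main, ?_⟩
  intro heq
  set A := a * I₁ R₁ + b * K₁ R₁
  set B := a * I₁ R₂ + b * K₁ R₂
  by_cases hB : B = 0
  · rw [hB, div_zero] at heq
    have : 0 < R₂ / R₁ := div_pos hR₂ hR₁
    linarith
  · have h := div_eq_div_iff (ne_of_gt hR₁) hB |>.mp heq
    nlinarith [main]
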